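/- arXiv:2501.11883 — 2 statements merged into one kernel-verified Lean document; each statement's English description precedes it below -/
import Mathlib

section
/- Let 0 < q < 1 and j ≥ 1. Then the conditional entropy of an i.i.d. Bernoulli(q) vector of length 2^j given even parity satisfies the recursion H₀^j(q) = h(q̄_j(q)) + (1 − q̄_j(q)) · 2 · H₀^{j−1}(q) + q̄_j(q) · 2 · H₁^{j−1}(q). -/
open Finset

/-- Hamming weight of a binary string `e ∈ {0,1}^n`. -/
def wt {n : ℕ} (e : Fin n → Bool) : ℕ := (Finset.univ.filter fun i => e i = true).card

/-- i.i.d. Bernoulli(q) probability of the binary string `e ∈ {0,1}^n`. -/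
noncomputable def Pq (q : ℝ) {n : ℕ} (e : Fin n → Bool) : ℝ :=
  q ^ wt e * (1 - q) ^ (n - wt e)

/-- `p̄_j(q) = (1 − (1−2q)^{2^j})/2`. -/
noncomputable def pbar (q : ℝ) (j : ℕ) : ℝ := (1 - (1 - 2 * q) ^ (2 ^ j)) / 2

/-- `q̄_j(q) = p̄_{j−1}(q)²/(1 − p̄_j(q))`. -/
noncomputable def qbar (q : ℝ) (j : ℕ) : ℝ := (pbar q (j - 1)) ^ 2 / (1 - pbar q j)

/-- Binary entropy function (base 2), with `h(0) = h(1) = 0`. -/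
noncomputable def binEnt (x : ℝ) : ℝ := -(x * Real.logb 2 x) - (1 - x) * Real.logb 2 (1 - x)

/-- `Π_b^j(q)`: probability that an i.i.d. Bernoulli(q) vector of length `2^j` has parity `b`. -/
noncomputable def Pib (q : ℝ) (j : ℕ) (b : ℕ) : ℝ := if b = 1 then pbar q j else 1 - pbar q j

/-- `H_b^j(q)`: Shannon entropy (base 2) of an i.i.d. Bernoulli(q) vector of length `2^j`
conditioned on its parity being `b`. -/
noncomputable def Hcond (q : ℝ) (j : ℕ) (b : ℕ) : ℝ :=
  -∑ e ∈ Finset.univ.filter (fun e : Fin (2 ^ j) → Bool => wt e % 2 = b),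
      (Pq q e / Pib q j b) * Real.logb 2 (Pq q e / Pib q j b)

lemma wt_le {n : ℕ} (e : Fin n → Bool) : wt e ≤ n := by
  simpa [wt] using (Finset.card_filter_le univ _).trans (by simp)

lemma Pq_pos {q : ℝ} (hq0 : 0 < q) (hq1 : q < 1) {n : ℕ} (e : Fin n → Bool) : 0 < Pq q e := by
  have h : 0 < 1 - q := by linarith
  unfold Pq; positivity

lemma Pq_prod (q : ℝ) {n : ℕ} (e : Fin n → Bool) :
    Pq q e = ∏ i, (if e i = true then q else 1 - q) := by
  rw [Finset.prod_ite, Finset.prod_const, Finset.prod_const]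
  have := Finset.card_filter_add_card_filter_not (s := (univ : Finset (Fin n)))
    (p := fun i => e i = true)
  simp only [Finset.card_univ, Fintype.card_fin] at this
  unfold Pq wt
  congr 2
  omega

lemma sum_prod_bool (f : Bool → ℝ) (n : ℕ) :
    ∑ e : Fin n → Bool, ∏ i, f (e i) = (f true + f false) ^ n := by
  rw [← Fintype.piFinset_univ, ← Finset.prod_univ_sum]
  simp

lemma sum_Pq_all (q : ℝ) (n : ℕ) : ∑ e : Fin n → Bool, Pq q e = 1 := by
  simp_rw [Pq_prod q]
  rw [sum_prod_bool (fun b => if b = true then q else 1 - q) n]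
  norm_num

lemma sum_Pq_alt (q : ℝ) (n : ℕ) :
    ∑ e : Fin n → Bool, (if wt e % 2 = 0 then (1:ℝ) else -1) * Pq q e = (1 - 2*q) ^ n := by
  have key : ∀ e : Fin n → Bool, (if wt e % 2 = 0 then (1:ℝ) else -1) * Pq q e
      = ∏ i, (if e i = true then -q else 1 - q) := by
    intro e
    have h1 : ∀ i : Fin n, (if e i = true then -q else 1 - q)
        = (if e i = true then (-1:ℝ) else 1) * (if e i = true then q else 1 - q) := by
      intro i; by_cases h : e i = true <;> simp [h]
    simp_rw [h1, Finset.prod_mul_distrib, ← Pq_prod]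
    congr 1
    rw [Finset.prod_ite, Finset.prod_const, Finset.prod_const, one_pow, mul_one]
    show _ = (-1:ℝ) ^ wt e
    rcases Nat.even_or_odd (wt e) with h | h
    · rw [if_pos (Nat.even_iff.mp h), (Even.neg_one_pow h)]
    · rw [if_neg (by have := Nat.odd_iff.mp h; omega), (Odd.neg_one_pow h)]
  simp_rw [key]
  rw [sum_prod_bool (fun b => if b = true then -q else 1 - q) n]
  norm_num
  ring_nf

lemma sum_Pq_parity (q : ℝ) (n : ℕ) (b : ℕ) (hb : b < 2) :
    ∑ e ∈ Finset.univ.filter (fun e : Fin n → Bool => wt e % 2 = b), Pq q e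
      = if b = 1 then (1 - (1 - 2*q) ^ n)/2 else (1 + (1 - 2*q) ^ n)/2 := by
  have hnot : Finset.univ.filter (fun e : Fin n → Bool => ¬ (wt e % 2 = 0))
      = Finset.univ.filter (fun e : Fin n → Bool => wt e % 2 = 1) := by
    apply Finset.filter_congr; intro e _; constructor <;> intro h <;> omega
  have h1 := Finset.sum_filter_add_sum_filter_not Finset.univ
    (fun e : Fin n → Bool => wt e % 2 = 0) (Pq q)
  rw [sum_Pq_all, hnot] at h1
  have h2 : ∑ e : Fin n → Bool, (if wt e % 2 = 0 then (1:ℝ) else -1) * Pq q e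
      = (∑ e ∈ Finset.univ.filter (fun e : Fin n → Bool => wt e % 2 = 0), Pq q e)
        - ∑ e ∈ Finset.univ.filter (fun e : Fin n → Bool => wt e % 2 = 1), Pq q e := by
    have : ∀ e : Fin n → Bool, (if wt e % 2 = 0 then (1:ℝ) else -1) * Pq q e
        = (if wt e % 2 = 0 then Pq q e else - Pq q e) := by
      intro e; by_cases h : wt e % 2 = 0 <;> simp [h]
    simp_rw [this]
    rw [Finset.sum_ite, hnot, Finset.sum_neg_distrib]
    ring
  rw [sum_Pq_alt] at h2
  interval_cases b <;> simp <;> linarith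

noncomputable def glue {a b : ℕ} (e1 : Fin a → Bool) (e2 : Fin b → Bool) : Fin (a+b) → Bool :=
  Sum.elim e1 e2 ∘ finSumFinEquiv.symm

lemma wt_eq_sum {n : ℕ} (e : Fin n → Bool) : wt e = ∑ i, (if e i = true then 1 else 0) := by
  rw [wt, Finset.card_filter]

lemma wt_glue {a b : ℕ} (e1 : Fin a → Bool) (e2 : Fin b → Bool) :
    wt (glue e1 e2) = wt e1 + wt e2 := by
  rw [wt_eq_sum, wt_eq_sum, wt_eq_sum]
  rw [show (∑ i, (if glue e1 e2 i = true then 1 else 0))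
    = ∑ s : Fin a ⊕ Fin b, (if Sum.elim e1 e2 s = true then 1 else 0) from
    (Fintype.sum_equiv finSumFinEquiv.symm _ _ (fun i => rfl))]
  rw [Fintype.sum_sum_type]
  simp only [Sum.elim_inl, Sum.elim_inr]
  rfl

lemma Pq_glue (q : ℝ) {a b : ℕ} (e1 : Fin a → Bool) (e2 : Fin b → Bool) :
    Pq q (glue e1 e2) = Pq q e1 * Pq q e2 := by
  unfold Pq
  rw [wt_glue]
  have h1 := wt_le e1; have h2 := wt_le e2
  rw [show a + b - (wt e1 + wt e2) = (a - wt e1) + (b - wt e2) by omega, pow_add, pow_add]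
  ring

noncomputable def glueEquiv (a b : ℕ) : ((Fin a → Bool) × (Fin b → Bool)) ≃ (Fin (a+b) → Bool) where
  toFun p := glue p.1 p.2
  invFun e := (fun i => e (finSumFinEquiv (Sum.inl i)), fun i => e (finSumFinEquiv (Sum.inr i)))
  left_inv p := by
    ext i <;> simp [glue]
  right_inv e := by
    ext i
    simp only [glue, Function.comp_apply]
    obtain ⟨s, rfl⟩ := finSumFinEquiv.surjective i
    rw [Equiv.symm_apply_apply]
    cases s <;> simp

lemma sum_parity_split (a : ℕ) (f : (Fin (a+a) → Bool) → ℝ) :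
    ∑ e ∈ Finset.univ.filter (fun e : Fin (a+a) → Bool => wt e % 2 = 0), f e
    = (∑ e1 ∈ Finset.univ.filter (fun e : Fin a → Bool => wt e % 2 = 0),
        ∑ e2 ∈ Finset.univ.filter (fun e : Fin a → Bool => wt e % 2 = 0), f (glue e1 e2))
      + ∑ e1 ∈ Finset.univ.filter (fun e : Fin a → Bool => wt e % 2 = 1),
        ∑ e2 ∈ Finset.univ.filter (fun e : Fin a → Bool => wt e % 2 = 1), f (glue e1 e2) := by
  have step1 : ∑ e ∈ Finset.univ.filter (fun e : Fin (a+a) → Bool => wt e % 2 = 0), f e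
      = ∑ p ∈ Finset.univ.filter
          (fun p : (Fin a → Bool) × (Fin a → Bool) => (wt p.1 + wt p.2) % 2 = 0),
          f (glue p.1 p.2) := by
    refine Finset.sum_equiv (glueEquiv a a).symm ?_ ?_
    · intro e
      simp only [Finset.mem_filter, Finset.mem_univ, true_and]
      have he : glue ((glueEquiv a a).symm e).1 ((glueEquiv a a).symm e).2 = e :=
        (glueEquiv a a).apply_symm_apply e
      rw [← wt_glue, he]
    · intro e _
      have he : glue ((glueEquiv a a).symm e).1 ((glueEquiv a a).symm e).2 = e :=
        (glueEquiv a a).apply_symm_apply e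
      rw [he]
  rw [step1]
  have step2 : Finset.univ.filter
      (fun p : (Fin a → Bool) × (Fin a → Bool) => (wt p.1 + wt p.2) % 2 = 0)
      = ((Finset.univ.filter (fun e : Fin a → Bool => wt e % 2 = 0)) ×ˢ
          (Finset.univ.filter (fun e : Fin a → Bool => wt e % 2 = 0)))
        ∪ ((Finset.univ.filter (fun e : Fin a → Bool => wt e % 2 = 1)) ×ˢ
          (Finset.univ.filter (fun e : Fin a → Bool => wt e % 2 = 1))) := by
    ext p
    simp only [Finset.mem_filter, Finset.mem_univ, true_and, Finset.mem_union,
      Finset.mem_product]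
    omega
  rw [step2, Finset.sum_union, Finset.sum_product, Finset.sum_product]
  rw [Finset.disjoint_left]
  intro p hp hp'
  simp only [Finset.mem_product, Finset.mem_filter, Finset.mem_univ, true_and] at hp hp'
  omega


lemma pbar_mem {q : ℝ} (hq0 : 0 < q) (hq1 : q < 1) (j : ℕ) :
    0 < pbar q j ∧ pbar q j < 1 := by
  have habs : |1 - 2*q| < 1 := by rw [abs_lt]; constructor <;> linarith
  have h : |(1 - 2*q) ^ (2^j)| < 1 := by
    rw [abs_pow]
    calc |1-2*q| ^ 2^j ≤ |1-2*q| ^ 1 := by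
          apply pow_le_pow_of_le_one (abs_nonneg _) (le_of_lt habs) (Nat.one_le_two_pow)
      _ < 1 := by simpa using habs
  rw [abs_lt] at h
  unfold pbar
  constructor <;> [linarith; linarith]

lemma pbar_succ (q : ℝ) (m : ℕ) :
    1 - pbar q (m+1) = (1 - pbar q m)^2 + (pbar q m)^2 := by
  unfold pbar
  rw [pow_succ, pow_mul]
  ring

lemma double_sum_entropy {ι : Type*} (s : Finset ι) (P : ι → ℝ)
    (hP : ∀ i ∈ s, 0 < P i) (A Pi : ℝ) (hA : 0 < A) (hPi : 0 < Pi)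
    (hsum : ∑ i ∈ s, P i = A) :
    ∑ e1 ∈ s, ∑ e2 ∈ s, (P e1 * P e2 / Pi) * Real.logb 2 (P e1 * P e2 / Pi)
    = (A^2/Pi) * Real.logb 2 (A^2/Pi)
      + (A^2/Pi) * 2 * (∑ i ∈ s, (P i / A) * Real.logb 2 (P i / A)) := by
  set x : ι → ℝ := fun i => P i / A with hx
  set l : ι → ℝ := fun i => Real.logb 2 (P i / A) with hl
  set c : ℝ := Real.logb 2 (A^2/Pi) with hc
  have hxsum : ∑ i ∈ s, x i = 1 := by
    rw [hx]; rw [← Finset.sum_div, hsum, div_self (ne_of_gt hA)]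
  have hterm : ∀ e1 ∈ s, ∀ e2 ∈ s,
      (P e1 * P e2 / Pi) * Real.logb 2 (P e1 * P e2 / Pi)
      = (A^2/Pi) * (x e1 * x e2 * (l e1 + l e2 + c)) := by
    intro e1 h1 e2 h2
    have p1 := hP e1 h1; have p2 := hP e2 h2
    have hprod : P e1 * P e2 / Pi = (x e1) * (x e2) * (A^2/Pi) := by
      field_simp [hx]; simp only [hx]; field_simp
    have hlog : Real.logb 2 (P e1 * P e2 / Pi) = l e1 + l e2 + c := by
      rw [hprod, Real.logb_mul, Real.logb_mul] <;>
        first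
        | rfl
        | positivity
    rw [hlog, hprod]; ring
  rw [Finset.sum_congr rfl (fun e1 h1 => Finset.sum_congr rfl (fun e2 h2 => hterm e1 h1 e2 h2))]
  have key : ∑ e1 ∈ s, ∑ e2 ∈ s, x e1 * x e2 * (l e1 + l e2 + c)
      = 2 * (∑ i ∈ s, x i * l i) + c := by
    have inner : ∀ e1 ∈ s, ∑ e2 ∈ s, x e1 * x e2 * (l e1 + l e2 + c)
        = x e1 * (l e1 + c) + x e1 * (∑ i ∈ s, x i * l i) := by
      intro e1 _
      have : ∀ e2 ∈ s, x e1 * x e2 * (l e1 + l e2 + c)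
          = (x e1 * (l e1 + c)) * x e2 + x e1 * (x e2 * l e2) := by
        intro e2 _; ring
      rw [Finset.sum_congr rfl this, Finset.sum_add_distrib, ← Finset.mul_sum,
        ← Finset.mul_sum, hxsum, mul_one]
    rw [Finset.sum_congr rfl inner, Finset.sum_add_distrib, ← Finset.sum_mul, hxsum, one_mul]
    have : ∀ e1 ∈ s, x e1 * (l e1 + c) = x e1 * l e1 + c * x e1 := by intro e1 _; ring
    rw [Finset.sum_congr rfl this, Finset.sum_add_distrib, ← Finset.mul_sum, hxsum, mul_one]
    ring
  simp_rw [← Finset.mul_sum]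
  rw [key]
  have : ∑ i ∈ s, P i / A * Real.logb 2 (P i / A) = ∑ i ∈ s, x i * l i := rfl
  rw [this]
  ring

noncomputable def Tsum (q Pi : ℝ) (n : ℕ) : ℝ :=
  ∑ e ∈ Finset.univ.filter (fun e : Fin n → Bool => wt e % 2 = 0),
    (Pq q e / Pi) * Real.logb 2 (Pq q e / Pi)

/-- For `0 < q < 1` and `j ≥ 1`, the conditional entropy of an i.i.d. Bernoulli(q) vector of
length `2^j` given even parity satisfies
`H₀^j(q) = h(q̄_j(q)) + (1 − q̄_j(q))·2·H₀^{j−1}(q) + q̄_j(q)·2·H₁^{j−1}(q)`. -/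
theorem Hcond_even_recursion (q : ℝ) (hq0 : 0 < q) (hq1 : q < 1) (j : ℕ) (hj : 1 ≤ j) :
    Hcond q j 0 = binEnt (qbar q j) + (1 - qbar q j) * 2 * Hcond q (j - 1) 0
      + qbar q j * 2 * Hcond q (j - 1) 1 := by
  obtain ⟨m, rfl⟩ : ∃ m, j = m + 1 := ⟨j - 1, by omega⟩
  have hm1 : m + 1 - 1 = m := by omega
  set p := pbar q m with hp
  obtain ⟨hp0, hp1⟩ := pbar_mem hq0 hq1 m
  set Pi := 1 - pbar q (m+1) with hPi
  have hPieq : Pi = (1-p)^2 + p^2 := pbar_succ q m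
  have hPipos : 0 < Pi := by
    rw [hPieq]
    have : p ≠ 0 := ne_of_gt hp0
    positivity
  -- the two half sums
  have hsum0 : ∑ e ∈ Finset.univ.filter (fun e : Fin (2^m) → Bool => wt e % 2 = 0), Pq q e
      = 1 - p := by
    rw [sum_Pq_parity q (2^m) 0 (by norm_num)]
    simp only [if_neg (by norm_num : (0:ℕ) ≠ 1)]
    rw [hp]; unfold pbar; ring
  have hsum1 : ∑ e ∈ Finset.univ.filter (fun e : Fin (2^m) → Bool => wt e % 2 = 1), Pq q e
      = p := by
    rw [sum_Pq_parity q (2^m) 1 (by norm_num)]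
    simp [hp, pbar]
  -- qbar
  have hqbar : qbar q (m+1) = p^2 / Pi := by
    unfold qbar
    rw [hm1, ← hp, ← hPi]
  have hqbar' : 1 - qbar q (m+1) = (1-p)^2 / Pi := by
    rw [hqbar, eq_div_iff (ne_of_gt hPipos), sub_mul, div_mul_cancel₀ _ (ne_of_gt hPipos),
      hPieq]
    ring
  -- Pib values
  have hPib0 : Pib q (m+1) 0 = Pi := by unfold Pib; simp [hPi]
  have hPibm0 : Pib q m 0 = 1 - p := by unfold Pib; simp [hp]
  have hPibm1 : Pib q m 1 = p := by unfold Pib; simp [hp]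
  -- rewrite Hcond at level m+1 via Tsum
  have hH : Hcond q (m+1) 0 = -Tsum q Pi (2^(m+1)) := by
    unfold Hcond Tsum
    rw [hPib0]
  have hcast : Tsum q Pi (2^(m+1)) = Tsum q Pi (2^m + 2^m) := by
    congr 1
    rw [pow_succ]; omega
  have hsplit : Tsum q Pi (2^m + 2^m)
      = (∑ e1 ∈ Finset.univ.filter (fun e : Fin (2^m) → Bool => wt e % 2 = 0),
          ∑ e2 ∈ Finset.univ.filter (fun e : Fin (2^m) → Bool => wt e % 2 = 0),
            (Pq q e1 * Pq q e2 / Pi) * Real.logb 2 (Pq q e1 * Pq q e2 / Pi))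
        + ∑ e1 ∈ Finset.univ.filter (fun e : Fin (2^m) → Bool => wt e % 2 = 1),
          ∑ e2 ∈ Finset.univ.filter (fun e : Fin (2^m) → Bool => wt e % 2 = 1),
            (Pq q e1 * Pq q e2 / Pi) * Real.logb 2 (Pq q e1 * Pq q e2 / Pi) := by
    unfold Tsum
    rw [sum_parity_split (2^m) (fun e => (Pq q e / Pi) * Real.logb 2 (Pq q e / Pi))]
    congr 1 <;>
    · apply Finset.sum_congr rfl; intro e1 _
      apply Finset.sum_congr rfl; intro e2 _
      rw [Pq_glue]
  have hd0 := double_sum_entropy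
    (Finset.univ.filter (fun e : Fin (2^m) → Bool => wt e % 2 = 0)) (Pq q)
    (fun i _ => Pq_pos hq0 hq1 i) (1-p) Pi (by linarith) hPipos hsum0
  have hd1 := double_sum_entropy
    (Finset.univ.filter (fun e : Fin (2^m) → Bool => wt e % 2 = 1)) (Pq q)
    (fun i _ => Pq_pos hq0 hq1 i) p Pi hp0 hPipos hsum1
  -- entropies at level m
  have hH0 : ∑ i ∈ Finset.univ.filter (fun e : Fin (2^m) → Bool => wt e % 2 = 0),
      (Pq q i / (1-p)) * Real.logb 2 (Pq q i / (1-p)) = -Hcond q m 0 := by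
    unfold Hcond; rw [hPibm0]; ring
  have hH1 : ∑ i ∈ Finset.univ.filter (fun e : Fin (2^m) → Bool => wt e % 2 = 1),
      (Pq q i / p) * Real.logb 2 (Pq q i / p) = -Hcond q m 1 := by
    unfold Hcond; rw [hPibm1]; ring
  rw [show (m + 1 - 1) = m from hm1]
  rw [hH, hcast, hsplit, hd0, hd1, hH0, hH1]
  rw [show (1-p)^2/Pi = 1 - qbar q (m+1) from hqbar'.symm,
    show p^2/Pi = qbar q (m+1) from hqbar.symm]
  unfold binEnt
  ring
end

section
/- (Second claim of Proposition 1.) Let s ≥ 1, N = 2^s, and define for 0 < q < 1 the function f(q) = (p̄_s(q)/N) · ∑_{i=0}^{s−1} { ∏_{j=1}^{i} (1 − 2q̄_{s−j+1}(q)) } · (1 − h(q̄_{s−i}(q))). Then f is differentiable on a right neighborhood of 0 and lim_{q→0⁺} f′(q) = s. In particular, the slope of the tangent at q = 0 of this lower bound on the OT capacity of the BSC grows without bound as s increases. -/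
/-- The first-round rate term of the polarization-based OT protocol with block length `N = 2^s`:
`f(q) = (p̄_s(q)/N)·∑_{i=0}^{s−1} {∏_{j=1}^{i} (1 − 2q̄_{s−j+1}(q))}·(1 − h(q̄_{s−i}(q)))`. -/
noncomputable def rateF (s : ℕ) (q : ℝ) : ℝ :=
  pbar q s / (2 ^ s : ℝ) *
    ∑ i ∈ Finset.range s,
      (∏ j ∈ Finset.range i, (1 - 2 * qbar q (s - j))) * (1 - binEnt (qbar q (s - i)))

open Real Filter Finset

noncomputable def Dp (j : ℕ) (q : ℝ) : ℝ := (2 ^ j : ℝ) * (1 - 2 * q) ^ (2 ^ j - 1)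
noncomputable def Dq (j : ℕ) (q : ℝ) : ℝ :=
  (2 * pbar q (j - 1) * Dp (j - 1) q * (1 - pbar q j) + (pbar q (j - 1)) ^ 2 * Dp j q)
    / (1 - pbar q j) ^ 2
noncomputable def Tg (j : ℕ) (q : ℝ) : ℝ := ∑ m ∈ Finset.range (2 ^ j), (1 - 2 * q) ^ m
noncomputable def Cq (j : ℕ) (q : ℝ) : ℝ :=
  (2 * Tg (j - 1) q * Dp (j - 1) q * (1 - pbar q j) + q * (Tg (j - 1) q) ^ 2 * Dp j q)
    / (1 - pbar q j) ^ 2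

lemma pbar_eq (q : ℝ) (j : ℕ) : pbar q j = q * Tg j q := by
  have h := geom_sum_mul (1 - 2 * q) (2 ^ j); unfold pbar Tg; linarith [h]

section pos
variable {q : ℝ} (hq : q ∈ Set.Ioo (0:ℝ) (1/2))
include hq

lemma pbar_pos (j : ℕ) : 0 < pbar q j := by
  have h1 : (0:ℝ) ≤ 1 - 2 * q := by nlinarith [hq.2]
  have h2 : (1 - 2 * q : ℝ) < 1 := by nlinarith [hq.1]
  have := pow_lt_one₀ h1 h2 (n := 2 ^ j) (by positivity)
  unfold pbar; linarith

lemma pbar_lt_half (j : ℕ) : pbar q j < 1 / 2 := by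
  have h1 : (0:ℝ) < 1 - 2 * q := by nlinarith [hq.2]
  have := pow_pos h1 (2 ^ j)
  unfold pbar; linarith

lemma one_sub_pbar_pos (j : ℕ) : 0 < 1 - pbar q j := by
  have := pbar_lt_half hq j; linarith

lemma qbar_pos (j : ℕ) : 0 < qbar q j :=
  div_pos (pow_pos (pbar_pos hq (j-1)) 2) (one_sub_pbar_pos hq j)

lemma qbar_lt_one (j : ℕ) : qbar q j < 1 := by
  rw [qbar, div_lt_one (one_sub_pbar_pos hq j)]
  nlinarith [pbar_pos hq (j-1), pbar_lt_half hq (j-1), pbar_lt_half hq j, pbar_pos hq j]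

lemma Tg_pos (j : ℕ) : 0 < Tg j q := by
  have h1 : (0:ℝ) < 1 - 2 * q := by nlinarith [hq.2]
  exact Finset.sum_pos (fun m _ => pow_pos h1 m) (by simp)

end pos

lemma hasDerivAt_pbar (j : ℕ) (q : ℝ) : HasDerivAt (fun q => pbar q j) (Dp j q) q := by
  have h1 : HasDerivAt (fun q : ℝ => 1 - 2 * q) (0 - 2 * 1) q :=
    (hasDerivAt_const q (1:ℝ)).sub ((hasDerivAt_id q).const_mul 2)
  have h3 := ((hasDerivAt_const q (1:ℝ)).sub (h1.pow (2 ^ j))).div_const 2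
  exact h3.congr_deriv (by unfold Dp; push_cast; ring)

lemma hasDerivAt_qbar (j : ℕ) {q : ℝ} (h : 1 - pbar q j ≠ 0) :
    HasDerivAt (fun q => qbar q j) (Dq j q) q := by
  have h1 := ((hasDerivAt_pbar (j-1) q).pow 2).div
    ((hasDerivAt_const q (1:ℝ)).sub (hasDerivAt_pbar j q)) h
  exact h1.congr_deriv (by unfold Dq; simp only [Pi.sub_apply, Pi.pow_apply]; push_cast; ring)

lemma hasDerivAt_binEnt {x : ℝ} (h0 : 0 < x) (h1 : x < 1) :
    HasDerivAt binEnt (Real.logb 2 (1 - x) - Real.logb 2 x) x := by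
  have hl2 : Real.log 2 ≠ 0 := ne_of_gt (Real.log_pos one_lt_two)
  have hx1 : (0:ℝ) < 1 - x := by linarith
  have e1 : HasDerivAt (fun x : ℝ => x * Real.log x) (Real.log x + 1) x := by
    have := (hasDerivAt_id x).mul (Real.hasDerivAt_log h0.ne')
    exact this.congr_deriv (by simp only [id_eq, mul_inv_cancel₀ h0.ne']; ring)
  have e2 : HasDerivAt (fun x : ℝ => (1 - x) * Real.log (1 - x))
      (-(Real.log (1 - x) + 1)) x := by
    have einner : HasDerivAt (fun x : ℝ => 1 - x) (-1) x := by
      exact ((hasDerivAt_const x (1:ℝ)).sub (hasDerivAt_id x)).congr_deriv (by norm_num)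
    have hcomp := (((hasDerivAt_id (1 - x)).mul
      (Real.hasDerivAt_log hx1.ne')).comp x einner)
    exact hcomp.congr_deriv (by simp only [id_eq, mul_inv_cancel₀ hx1.ne']; ring)
  have heq : binEnt = fun x : ℝ =>
      -(x * Real.log x / Real.log 2) - (1 - x) * Real.log (1 - x) / Real.log 2 := by
    funext y; unfold binEnt Real.logb; ring
  rw [heq]
  have := ((e1.div_const (Real.log 2)).neg).sub (e2.div_const (Real.log 2))
  exact this.congr_deriv (by unfold Real.logb; field_simp; ring)

noncomputable def Pf (s i : ℕ) (q : ℝ) : ℝ := ∏ j ∈ Finset.range i, (1 - 2 * qbar q (s - j))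

noncomputable def DPf (s i : ℕ) (q : ℝ) : ℝ :=
  ∑ j ∈ Finset.range i,
    (∏ k ∈ (Finset.range i).erase j, (1 - 2 * qbar q (s - k))) * (-(2 * Dq (s - j) q))

noncomputable def Bf (s : ℕ) (q : ℝ) : ℝ :=
  ∑ i ∈ Finset.range s, Pf s i q * (1 - binEnt (qbar q (s - i)))

noncomputable def DBf (s : ℕ) (q : ℝ) : ℝ :=
  ∑ i ∈ Finset.range s,
    (DPf s i q * (1 - binEnt (qbar q (s - i)))
      + Pf s i q * (-((Real.logb 2 (1 - qbar q (s - i)) - Real.logb 2 (qbar q (s - i)))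
          * Dq (s - i) q)))

noncomputable def FD (s : ℕ) (q : ℝ) : ℝ :=
  Dp s q / 2 ^ s * Bf s q + pbar q s / 2 ^ s * DBf s q

lemma hasDerivAt_rateF (s : ℕ) {q : ℝ} (hq : q ∈ Set.Ioo (0:ℝ) (1/2)) :
    HasDerivAt (rateF s) (FD s q) q := by
  have hne : ∀ j : ℕ, 1 - pbar q j ≠ 0 := fun j => (one_sub_pbar_pos hq j).ne'
  have hA : HasDerivAt (fun q => pbar q s / (2 ^ s : ℝ)) (Dp s q / 2 ^ s) q :=
    (hasDerivAt_pbar s q).div_const _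
  have hB : HasDerivAt (Bf s) (DBf s q) q := by
    apply HasDerivAt.fun_sum
    intro i _
    have hP : HasDerivAt (fun q => Pf s i q) (DPf s i q) q := by
      have hfac : ∀ j ∈ Finset.range i,
          HasDerivAt (fun q => 1 - 2 * qbar q (s - j)) (-(2 * Dq (s - j) q)) q :=
        fun j _ => ((hasDerivAt_qbar (s - j) (hne _)).const_mul 2).const_sub 1
      have := HasDerivAt.fun_finsetProd hfac
      simpa [Pf, DPf, smul_eq_mul] using this
    have hE : HasDerivAt (fun q => 1 - binEnt (qbar q (s - i)))
        (-((Real.logb 2 (1 - qbar q (s - i)) - Real.logb 2 (qbar q (s - i)))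
          * Dq (s - i) q)) q := by
      have hcomp := (hasDerivAt_binEnt (qbar_pos hq (s - i)) (qbar_lt_one hq (s - i))).comp q
        (hasDerivAt_qbar (s - i) (hne _))
      exact hcomp.const_sub 1
    exact hP.mul hE
  have := hA.mul hB
  exact this

lemma differentiableAt_rateF (s : ℕ) {q : ℝ} (hq : q ∈ Set.Ioo (0:ℝ) (1/2)) :
    DifferentiableAt ℝ (rateF s) q := (hasDerivAt_rateF s hq).differentiableAt

lemma pbar_zero (j : ℕ) : pbar 0 j = 0 := by simp [pbar]
lemma qbar_zero (j : ℕ) : qbar 0 j = 0 := by simp [qbar, pbar_zero]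
lemma Tg_zero (j : ℕ) : Tg j 0 = 2 ^ j := by simp [Tg]
lemma binEnt_zero : binEnt 0 = 0 := by simp [binEnt]
lemma Dq_zero (j : ℕ) : Dq j 0 = 0 := by simp [Dq, pbar_zero]

lemma continuous_pbar (j : ℕ) : Continuous (fun q => pbar q j) := by
  unfold pbar; fun_prop

lemma continuous_Dp (j : ℕ) : Continuous (Dp j) := by
  unfold Dp; fun_prop

lemma continuous_Tg (j : ℕ) : Continuous (Tg j) :=
  continuous_finset_sum _ (fun m _ => by fun_prop)

lemma contAt_qbar (j : ℕ) : ContinuousAt (fun q => qbar q j) 0 := by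
  apply ContinuousAt.div
  · exact ((continuous_pbar (j-1)).pow 2).continuousAt
  · exact (continuous_const.sub (continuous_pbar j)).continuousAt
  · simp [pbar_zero]

lemma contAt_Dq (j : ℕ) : ContinuousAt (Dq j) 0 := by
  have hp : ∀ k : ℕ, Continuous (fun q => pbar q k) := continuous_pbar
  have hd : ∀ k : ℕ, Continuous (Dp k) := continuous_Dp
  apply ContinuousAt.div
  · exact Continuous.continuousAt (by continuity)
  · exact Continuous.continuousAt (by continuity)
  · simp [pbar_zero]

lemma contAt_Cq (j : ℕ) : ContinuousAt (Cq j) 0 := by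
  have hp : ∀ k : ℕ, Continuous (fun q => pbar q k) := continuous_pbar
  have hd : ∀ k : ℕ, Continuous (Dp k) := continuous_Dp
  have ht : ∀ k : ℕ, Continuous (Tg k) := continuous_Tg
  apply ContinuousAt.div
  · exact Continuous.continuousAt (by continuity)
  · exact Continuous.continuousAt (by continuity)
  · simp [pbar_zero]

lemma continuous_binEnt : Continuous binEnt := by
  have heq : binEnt = fun x : ℝ =>
      -(x * Real.log x / Real.log 2) - ((1 - x) * Real.log (1 - x)) / Real.log 2 := by
    funext y; unfold binEnt Real.logb; ring
  rw [heq]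
  exact ((Real.continuous_mul_log.div_const _).neg).sub
    ((Real.continuous_mul_log.comp (continuous_const.sub continuous_id)).div_const _)

lemma contAt_factor (s j : ℕ) : ContinuousAt (fun q : ℝ => 1 - 2 * qbar q (s - j)) 0 :=
  continuousAt_const.sub (continuousAt_const.mul (contAt_qbar (s - j)))

lemma contAt_Pf (s i : ℕ) : ContinuousAt (fun q => Pf s i q) 0 := by
  unfold Pf ContinuousAt
  exact tendsto_finset_prod _ (fun j _ => contAt_factor s j)

lemma contAt_DPf (s i : ℕ) : ContinuousAt (fun q => DPf s i q) 0 := by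
  unfold DPf ContinuousAt
  refine tendsto_finset_sum _ (fun j _ => ?_)
  refine Filter.Tendsto.mul ?_ ((contAt_Dq (s - j)).const_mul 2).neg
  exact tendsto_finset_prod _ (fun k _ => contAt_factor s k)

lemma contAt_binEnt_qbar (j : ℕ) : ContinuousAt (fun q => binEnt (qbar q j)) 0 :=
  (continuous_binEnt.continuousAt).comp (contAt_qbar j)

lemma contAt_Bf (s : ℕ) : ContinuousAt (Bf s) 0 := by
  unfold Bf ContinuousAt
  refine tendsto_finset_sum _ (fun i _ => ?_)
  exact (contAt_Pf s i).mul (continuousAt_const.sub (contAt_binEnt_qbar (s - i)))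

lemma Pf_zero (s i : ℕ) : Pf s i 0 = 1 := by simp [Pf, qbar_zero]
lemma Bf_zero (s : ℕ) : Bf s 0 = s := by
  simp [Bf, Pf_zero, qbar_zero, binEnt_zero]

lemma Dq_eq (j : ℕ) (q : ℝ) : Dq j q = q * Cq j q := by
  unfold Dq Cq
  rw [← mul_div_assoc]
  congr 1
  rw [pbar_eq q (j-1)]
  ring

lemma qbar_eq (j : ℕ) (q : ℝ) : qbar q j = q ^ 2 * ((Tg (j-1) q) ^ 2 / (1 - pbar q j)) := by
  unfold qbar
  rw [pbar_eq q (j-1), mul_pow, mul_div_assoc]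

lemma log_qbar_eq (j : ℕ) {q : ℝ} (hq : q ∈ Set.Ioo (0:ℝ) (1/2)) :
    Real.log (qbar q j) =
      2 * Real.log q + 2 * Real.log (Tg (j-1) q) - Real.log (1 - pbar q j) := by
  have hq0 : (0:ℝ) < q := hq.1
  have hT : 0 < Tg (j-1) q := Tg_pos hq (j-1)
  have hden : 0 < 1 - pbar q j := one_sub_pbar_pos hq j
  rw [qbar_eq, Real.log_mul (by positivity) (by positivity),
    Real.log_div (by positivity) hden.ne', Real.log_pow, Real.log_pow]
  push_cast
  ring

/-- `q ↦ q * (q * log q)` tends to `0` at `0`. -/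
lemma tendsto_sq_mul_log :
    Filter.Tendsto (fun q : ℝ => q * (q * Real.log q)) (nhds 0) (nhds 0) := by
  have h := (continuous_id.mul Real.continuous_mul_log).tendsto 0
  exact (by simpa using h : Tendsto (id * fun x : ℝ => x * Real.log x) (nhds 0) (nhds 0))

/-- The key cancellation: `pbar q s * Dq j q * logb 2 (qbar q j) → 0` as `q → 0⁺`. -/
lemma hard_limit (s j : ℕ) :
    Filter.Tendsto (fun q => pbar q s * Dq j q * Real.logb 2 (qbar q j))
      (nhdsWithin 0 (Set.Ioi 0)) (nhds 0) := by
  have hl2 : Real.log 2 ≠ 0 := ne_of_gt (Real.log_pos one_lt_two)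
  set g : ℝ → ℝ := fun q =>
    (Tg s q * Cq j q * 2 / Real.log 2) * (q * (q * Real.log q))
      + q ^ 2 * (Tg s q * Cq j q *
          (2 * Real.log (Tg (j-1) q) - Real.log (1 - pbar q j)) / Real.log 2) with hg
  have h1 : ContinuousAt (fun q => Tg s q * Cq j q * 2 / Real.log 2) 0 :=
    ((((continuous_Tg s).continuousAt.mul (contAt_Cq j)).mul continuousAt_const).div_const _)
  have hlt : ContinuousAt (fun q => Real.log (Tg (j-1) q)) 0 :=
    (Real.continuousAt_log (by rw [Tg_zero]; positivity)).comp (continuous_Tg (j-1)).continuousAt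
  have hlp : ContinuousAt (fun q => Real.log (1 - pbar q j)) 0 :=
    (Real.continuousAt_log (by rw [pbar_zero]; norm_num)).comp
      (continuous_const.sub (continuous_pbar j)).continuousAt
  have h2 : ContinuousAt (fun q => Tg s q * Cq j q *
      (2 * Real.log (Tg (j-1) q) - Real.log (1 - pbar q j)) / Real.log 2) 0 :=
    ((((continuous_Tg s).continuousAt.mul (contAt_Cq j)).mul
      ((continuousAt_const.mul hlt).sub hlp)).div_const _)
  have h3 : Filter.Tendsto (fun q : ℝ => q ^ 2) (nhds 0) (nhds 0) := by
    simpa using (continuous_pow 2).tendsto (0:ℝ)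
  have hgt : Filter.Tendsto g (nhds 0) (nhds 0) := by
    have := (h1.tendsto.mul tendsto_sq_mul_log).add (h3.mul h2.tendsto)
    simpa using this
  refine Filter.Tendsto.congr' ?_ (hgt.mono_left nhdsWithin_le_nhds)
  filter_upwards [Ioo_mem_nhdsGT_of_mem (Set.left_mem_Ico.2 (by norm_num : (0:ℝ) < 1/2))]
    with q hq
  have hlog : Real.logb 2 (qbar q j) = Real.log (qbar q j) / Real.log 2 := rfl
  rw [hg, hlog, log_qbar_eq j hq, pbar_eq q s, Dq_eq j q]
  ring

lemma tendsto_part1 (s : ℕ) :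
    Filter.Tendsto (fun q => Dp s q / 2 ^ s * Bf s q) (nhds 0) (nhds (s : ℝ)) := by
  have h : ContinuousAt (fun q => Dp s q / 2 ^ s * Bf s q) 0 :=
    (((continuous_Dp s).continuousAt).div_const _).mul (contAt_Bf s)
  have hval : Dp s 0 / 2 ^ s * Bf s 0 = (s : ℝ) := by
    rw [Bf_zero]
    have : Dp s 0 = 2 ^ s := by simp [Dp]
    rw [this]
    field_simp
  simpa [hval] using h.tendsto

lemma contAt_logb_one_sub_qbar (j : ℕ) :
    ContinuousAt (fun q => Real.logb 2 (1 - qbar q j)) 0 := by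
  refine (Real.continuousAt_logb ?_).comp (continuousAt_const.sub (contAt_qbar j))
  simp [qbar_zero]

lemma tendsto_part2 (s : ℕ) :
    Filter.Tendsto (fun q => pbar q s / 2 ^ s * DBf s q)
      (nhdsWithin 0 (Set.Ioi 0)) (nhds 0) := by
  have heq : ∀ q : ℝ, pbar q s / 2 ^ s * DBf s q =
      ∑ i ∈ Finset.range s,
        ((pbar q s / 2 ^ s) * (DPf s i q * (1 - binEnt (qbar q (s - i)))
            - Pf s i q * (Real.logb 2 (1 - qbar q (s - i)) * Dq (s - i) q))
          + (Pf s i q / 2 ^ s) *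
              (pbar q s * Dq (s - i) q * Real.logb 2 (qbar q (s - i)))) := by
    intro q
    unfold DBf
    rw [Finset.mul_sum]
    refine Finset.sum_congr rfl (fun i _ => ?_)
    ring
  have hterm : ∀ i ∈ Finset.range s,
      Filter.Tendsto (fun q : ℝ =>
        (pbar q s / 2 ^ s) * (DPf s i q * (1 - binEnt (qbar q (s - i)))
            - Pf s i q * (Real.logb 2 (1 - qbar q (s - i)) * Dq (s - i) q))
          + (Pf s i q / 2 ^ s) *
              (pbar q s * Dq (s - i) q * Real.logb 2 (qbar q (s - i))))
        (nhdsWithin 0 (Set.Ioi 0)) (nhds 0) := by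
    intro i _
    have hA : ContinuousAt (fun q : ℝ =>
        (pbar q s / 2 ^ s) * (DPf s i q * (1 - binEnt (qbar q (s - i)))
          - Pf s i q * (Real.logb 2 (1 - qbar q (s - i)) * Dq (s - i) q))) 0 := by
      refine ContinuousAt.mul (((continuous_pbar s).continuousAt).div_const _) ?_
      refine ContinuousAt.sub
        ((contAt_DPf s i).mul (continuousAt_const.sub (contAt_binEnt_qbar (s - i)))) ?_
      exact (contAt_Pf s i).mul ((contAt_logb_one_sub_qbar (s - i)).mul (contAt_Dq (s - i)))
    have hAt : Filter.Tendsto (fun q : ℝ =>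
        (pbar q s / 2 ^ s) * (DPf s i q * (1 - binEnt (qbar q (s - i)))
          - Pf s i q * (Real.logb 2 (1 - qbar q (s - i)) * Dq (s - i) q)))
        (nhdsWithin 0 (Set.Ioi 0)) (nhds 0) := by
      have := hA.tendsto.mono_left (nhdsWithin_le_nhds (s := Set.Ioi (0:ℝ)))
      simpa [pbar_zero] using this
    have hBt : Filter.Tendsto (fun q : ℝ => (Pf s i q / 2 ^ s) *
        (pbar q s * Dq (s - i) q * Real.logb 2 (qbar q (s - i))))
        (nhdsWithin 0 (Set.Ioi 0)) (nhds 0) := by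
      have hc := ((contAt_Pf s i).div_const ((2:ℝ) ^ s)).tendsto.mono_left
        (nhdsWithin_le_nhds (s := Set.Ioi (0:ℝ)))
      have := hc.mul (hard_limit s (s - i))
      simpa using this
    simpa using hAt.add hBt
  have hsum := tendsto_finset_sum (Finset.range s) hterm
  rw [show (fun q : ℝ => pbar q s / 2 ^ s * DBf s q) = _ from funext heq]
  simpa using hsum

lemma tendsto_FD (s : ℕ) :
    Filter.Tendsto (FD s) (nhdsWithin 0 (Set.Ioi 0)) (nhds (s : ℝ)) := by
  have h := ((tendsto_part1 s).mono_left
    (nhdsWithin_le_nhds (s := Set.Ioi (0:ℝ)))).add (tendsto_part2 s)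
  simp only [add_zero] at h; exact h

/-- Second claim of Proposition 1: for `s ≥ 1`, the function `f` is differentiable on a right
neighborhood of `0` and `lim_{q→0⁺} f′(q) = s`; the slope of the tangent at `q = 0` of this
lower bound on the OT capacity of the BSC grows without bound as `s` increases. -/
theorem rateF_deriv_at_zero (s : ℕ) (hs : 1 ≤ s) :
    (∃ ε > (0 : ℝ), ∀ x ∈ Set.Ioo (0 : ℝ) ε, DifferentiableAt ℝ (rateF s) x) ∧
    Filter.Tendsto (deriv (rateF s)) (nhdsWithin 0 (Set.Ioi 0)) (nhds (s : ℝ)) := by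
  constructor
  · exact ⟨1/2, by norm_num, fun x hx => differentiableAt_rateF s hx⟩
  · refine Filter.Tendsto.congr' ?_ (tendsto_FD s)
    filter_upwards [Ioo_mem_nhdsGT_of_mem (Set.left_mem_Ico.2 (by norm_num : (0:ℝ) < 1/2))]
      with q hq
    exact ((hasDerivAt_rateF s hq).deriv).symm
end
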